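/- Let T be a finite tree with at least 2 vertices, rooted at a vertex v₀, and let a : V(T) → ℚ_{>0} and b : E → ℚ_{>0} assign positive rational weights to vertices and to geometric edges. Suppose m ∈ ℚ_{>0} satisfies a(v) ≤ m for all vertices v, and suppose for each geometric edge e with endpoints u, w that 2·b(e) ≤ a(u) and 2·b(e) ≤ a(w), and moreover a(w)/b(e) ∈ ℤ for the endpoint w farther from v₀. Then ∑_{v ∈ V(T)} 1/a(v) − ∑_{e ∈ E} 1/b(e) ≤ −(|E| − 1)/m, where |E| is the number of geometric edges. -/

import Mathlib

open SimpleGraph Finset Walk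

theorem stmt_12 {V : Type*} [Fintype V] (G : SimpleGraph V) (hG : G.IsTree)
    (hV : 2 ≤ Fintype.card V) (v₀ : V) [Fintype G.edgeSet]
    (a : V → ℚ) (b : G.edgeSet → ℚ) (m : ℚ) (hm : 0 < m)
    (ha : ∀ v, 0 < a v) (hb : ∀ e, 0 < b e)
    (ham : ∀ v, a v ≤ m)
    (hedge : ∀ (e : G.edgeSet) (u w : V), (e : Sym2 V) = s(u, w) →
      2 * b e ≤ a u ∧ 2 * b e ≤ a w ∧
        (G.dist v₀ u < G.dist v₀ w → ∃ z : ℤ, a w / b e = (z : ℚ))) :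
    (∑ v, 1 / a v) - (∑ e : G.edgeSet, 1 / b e)
      ≤ -(((Fintype.card G.edgeSet : ℚ) - 1) / m) := by
  classical
  have hconn := hG.isConnected
  choose f hf hfu using fun v => hG.existsUnique_path v v₀
  have hlen : ∀ v, (f v).length = G.dist v₀ v := by
    intro v
    obtain ⟨p, hp, hl⟩ := (hconn v v₀).exists_path_of_dist
    rw [← hfu v p hp, hl]
    exact SimpleGraph.dist_comm
  have hdist : ∀ v, v ≠ v₀ → G.dist v₀ ((f v).getVert 1) < G.dist v₀ v := by
    intro v hv
    have hnn : ¬ (f v).Nil := Walk.not_nil_of_ne hv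
    have h1 : G.dist ((f v).getVert 1) v₀ ≤ (f v).tail.length := SimpleGraph.dist_le _
    have h2 := Walk.length_tail_add_one hnn
    have h3 : G.dist v₀ ((f v).getVert 1) = G.dist ((f v).getVert 1) v₀ :=
      SimpleGraph.dist_comm
    have h4 := hlen v
    omega
  -- the map from non-root vertices to edges
  set F : {v // v ≠ v₀} → G.edgeSet := fun v =>
    ⟨((f v.1).firstDart (Walk.not_nil_of_ne v.2)).edge, Dart.edge_mem _⟩ with hF
  have heF : ∀ v : {v // v ≠ v₀},
      (F v : Sym2 V) = s(v.1, (f v.1).getVert 1) := fun v => rfl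
  have hinj : Function.Injective F := by
    rintro v w h
    have h' : s(v.1, (f v.1).getVert 1) = s(w.1, (f w.1).getVert 1) := by
      rw [← heF, ← heF, h]
    rw [Sym2.eq_iff] at h'
    rcases h' with ⟨h1, _⟩ | ⟨h1, h2⟩
    · exact Subtype.ext h1
    · exfalso
      have d1 := hdist v.1 v.2
      have d2 := hdist w.1 w.2
      rw [h2] at d1
      rw [← h1] at d2
      omega
  have hcardV : Fintype.card {v // v ≠ v₀} = Fintype.card V - 1 := by
    have : Fintype.card {v // v = v₀} = 1 := Fintype.card_subtype_eq v₀
    have h := Fintype.card_subtype_compl (fun v => v = v₀)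
    rw [this] at h
    exact h
  have hcardE : G.edgeFinset.card = Fintype.card G.edgeSet :=
    Set.toFinset_card _
  have hcard : Fintype.card {v // v ≠ v₀} = Fintype.card G.edgeSet := by
    have := hG.card_edgeFinset
    omega
  have hbij : Function.Bijective F :=
    (Fintype.bijective_iff_injective_and_card F).2 ⟨hinj, hcard⟩
  -- transport the edge sum
  have hsumE : ∑ v : {v // v ≠ v₀}, 1 / b (F v) = ∑ e : G.edgeSet, 1 / b e :=
    Fintype.sum_bijective F hbij _ _ (fun v => rfl)
  -- split off the root from the vertex sum
  have hsumV : ∑ v : V, 1 / a v = 1 / a v₀ + ∑ v : {v // v ≠ v₀}, 1 / a v.1 := by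
    have h1 : ∑ v ∈ Finset.univ.erase v₀, 1 / a v
        = ∑ v : {v // v ≠ v₀}, 1 / a v.1 :=
      Finset.sum_subtype _ (fun x => by simp [Finset.mem_erase]) (fun v => 1 / a v)
    rw [← h1, ← Finset.add_sum_erase Finset.univ _ (Finset.mem_univ v₀)]
  -- find a neighbour of the root
  obtain ⟨w, hw⟩ := Fintype.exists_ne_of_one_lt_card hV v₀
  set r : G.Walk v₀ w := (f w).reverse with hr
  have hrn : ¬ r.Nil := Walk.not_nil_of_ne (Ne.symm hw)
  have hadj : G.Adj v₀ (r.getVert 1) := r.adj_snd hrn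
  set v₁ : V := r.getVert 1 with hv₁def
  have hv₁ : v₁ ≠ v₀ := hadj.ne'
  -- the edge assigned to v₁ is the edge v₁v₀
  have hfv₁ : f v₁ = Walk.cons hadj.symm Walk.nil := by
    refine (hfu v₁ _ ?_).symm
    simp [Walk.cons_isPath_iff, hv₁]
  have heF₁ : (F ⟨v₁, hv₁⟩ : Sym2 V) = s(v₁, v₀) := by
    rw [heF ⟨v₁, hv₁⟩, hfv₁]
    rfl
  -- per-term bounds
  have hterm : ∀ v : {v // v ≠ v₀}, 1 / a v.1 - 1 / b (F v) ≤ -(1/m) := by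
    intro v
    obtain ⟨h2u, h2v, -⟩ := hedge (F v) ((f v.1).getVert 1) v.1
      (by rw [heF v, Sym2.eq_swap])
    have hb' := hb (F v)
    have ha' := ha v.1
    have hmi : 1 / m ≤ 1 / a v.1 := one_div_le_one_div_of_le ha' (ham v.1)
    have key : 2 / a v.1 ≤ 1 / b (F v) := by
      rw [div_le_div_iff₀ ha' hb']
      linarith
    have : 2 / a v.1 = 1 / a v.1 + 1 / a v.1 := by ring
    linarith
  have hterm₁ : 1 / a v₀ + (1 / a v₁ - 1 / b (F ⟨v₁, hv₁⟩)) ≤ 0 := by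
    obtain ⟨h2u, h2v, -⟩ := hedge (F ⟨v₁, hv₁⟩) v₁ v₀ heF₁
    have hb' := hb (F ⟨v₁, hv₁⟩)
    have h1 : 1 / a v₀ ≤ 1 / (2 * b (F ⟨v₁, hv₁⟩)) :=
      one_div_le_one_div_of_le (by positivity) h2v
    have h2 : 1 / a v₁ ≤ 1 / (2 * b (F ⟨v₁, hv₁⟩)) :=
      one_div_le_one_div_of_le (by positivity) h2u
    have h3 : 1 / (2 * b (F ⟨v₁, hv₁⟩)) * 2 = 1 / b (F ⟨v₁, hv₁⟩) := by
      field_simp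
    linarith
  -- put it together
  set N := Fintype.card G.edgeSet with hN
  have hN1 : 1 ≤ N := by
    have := hG.card_edgeFinset
    omega
  have hsplit : ∑ v : {v // v ≠ v₀}, (1 / a v.1 - 1 / b (F v))
      = (1 / a v₁ - 1 / b (F ⟨v₁, hv₁⟩))
        + ∑ v ∈ Finset.univ.erase ⟨v₁, hv₁⟩, (1 / a v.1 - 1 / b (F v)) :=
    (Finset.add_sum_erase Finset.univ _ (Finset.mem_univ (⟨v₁, hv₁⟩ : {v // v ≠ v₀}))).symm
  have hrest : ∑ v ∈ Finset.univ.erase (⟨v₁, hv₁⟩ : {v // v ≠ v₀}),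
      (1 / a v.1 - 1 / b (F v)) ≤ ((N : ℚ) - 1) * (-(1/m)) := by
    calc ∑ v ∈ Finset.univ.erase (⟨v₁, hv₁⟩ : {v // v ≠ v₀}),
        (1 / a v.1 - 1 / b (F v))
        ≤ ∑ _v ∈ Finset.univ.erase (⟨v₁, hv₁⟩ : {v // v ≠ v₀}), (-(1/m)) :=
          Finset.sum_le_sum (fun v _ => hterm v)
      _ = ((Finset.univ.erase (⟨v₁, hv₁⟩ : {v // v ≠ v₀})).card : ℚ) * (-(1/m)) := by
          rw [Finset.sum_const, nsmul_eq_mul]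
      _ = ((N : ℚ) - 1) * (-(1/m)) := by
          rw [Finset.card_erase_of_mem (Finset.mem_univ _), Finset.card_univ, hcard]
          have : ((N - 1 : ℕ) : ℚ) = (N : ℚ) - 1 := by
            push_cast [Nat.cast_sub hN1]
            ring
          rw [this]
  have hfinal : (∑ v, 1 / a v) - (∑ e : G.edgeSet, 1 / b e)
      = 1 / a v₀ + ∑ v : {v // v ≠ v₀}, (1 / a v.1 - 1 / b (F v)) := by
    rw [Finset.sum_sub_distrib, hsumE, hsumV]
    ring
  rw [hfinal, hsplit]
  have : -(((N : ℚ) - 1) / m) = ((N : ℚ) - 1) * (-(1/m)) := by ring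
  rw [this]
  linarith
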